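/- Let σ_P², σ_Q² > 1 with σ_P² ≠ σ_Q² possible, set ξ := (σ_P² − 1)/(σ_Q² − 1) and μ_j := √(1 + j(σ_Q² − 1)), and for integers j > ξ define probability measures P_j, Q_j on the four points {±1, ±μ_j} by P_j(±1) = 1/2 − ξ/(2j), P_j(±μ_j) = ξ/(2j), Q_j(±1) = 1/2 − 1/(2j), Q_j(±μ_j) = 1/(2j). Then P_j has mean 0 and variance σ_P², Q_j has mean 0 and variance σ_Q², and H²(P_j, Q_j) = h²(ξ/j, 1/j), which tends to 0 as j → ∞. -/

import Mathlib

open MeasureTheory Real Filter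
open scoped ENNReal

/-- The squared Hellinger distance `H²(P,Q) = (1/2)∫(√p − √q)² dμ`, computed with
respect to the dominating measure `μ = P + Q`. -/
noncomputable def hellingerSq (P Q : Measure ℝ) : ℝ :=
  (1 / 2) * ∫ x, (Real.sqrt ((P.rnDeriv (P + Q)) x).toReal
      - Real.sqrt ((Q.rnDeriv (P + Q)) x).toReal) ^ 2 ∂(P + Q)

/-- The binary squared Hellinger distance
`h²(r,s) = (1/2)((√r − √s)² + (√(1−r) − √(1−s))²)`. -/
noncomputable def binaryH (r s : ℝ) : ℝ :=
  (1 / 2) * ((Real.sqrt r - Real.sqrt s) ^ 2 +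
    (Real.sqrt (1 - r) - Real.sqrt (1 - s)) ^ 2)

/-- The quaternary probability measure on `{1, −1, μ, −μ}` with mass `w` at each of
`±1` and mass `w'` at each of `±μ`. -/
noncomputable def quaternary (μ w w' : ℝ) : Measure ℝ :=
  ENNReal.ofReal w • Measure.dirac 1 + ENNReal.ofReal w • Measure.dirac (-1) +
  ENNReal.ofReal w' • Measure.dirac μ + ENNReal.ofReal w' • Measure.dirac (-μ)

instance quaternary.isFiniteMeasure (μ₀ w w' : ℝ) : IsFiniteMeasure (quaternary μ₀ w w') := by
  constructor
  simp only [quaternary, Measure.add_apply, Measure.smul_apply, Measure.dirac_apply_of_mem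
    (Set.mem_univ _), smul_eq_mul, mul_one]
  exact ENNReal.add_lt_top.2 ⟨ENNReal.add_lt_top.2 ⟨ENNReal.add_lt_top.2
    ⟨ENNReal.ofReal_lt_top, ENNReal.ofReal_lt_top⟩, ENNReal.ofReal_lt_top⟩, ENNReal.ofReal_lt_top⟩

lemma integrable_smul_dirac (c : ℝ≥0∞) (hc : c ≠ ∞) (a : ℝ) (f : ℝ → ℝ) :
    Integrable f (c • Measure.dirac a) := by
  have h : Integrable f (Measure.dirac a) := by
    refine (integrable_const (f a)).congr ?_
    rw [Filter.EventuallyEq, MeasureTheory.ae_dirac_eq]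
    exact Filter.eventually_pure.2 rfl
  exact h.smul_measure hc

lemma integral_quaternary (μ₀ w w' : ℝ) (hw : 0 ≤ w) (hw' : 0 ≤ w')
    (f : ℝ → ℝ) :
    ∫ x, f x ∂(quaternary μ₀ w w') =
      w * f 1 + w * f (-1) + w' * f μ₀ + w' * f (-μ₀) := by
  have i1 := integrable_smul_dirac (ENNReal.ofReal w) ENNReal.ofReal_ne_top 1 f
  have i2 := integrable_smul_dirac (ENNReal.ofReal w) ENNReal.ofReal_ne_top (-1) f
  have i3 := integrable_smul_dirac (ENNReal.ofReal w') ENNReal.ofReal_ne_top μ₀ f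
  have i4 := integrable_smul_dirac (ENNReal.ofReal w') ENNReal.ofReal_ne_top (-μ₀) f
  rw [quaternary, integral_add_measure ((i1.add_measure i2).add_measure i3) i4,
    integral_add_measure (i1.add_measure i2) i3, integral_add_measure i1 i2,
    integral_smul_measure, integral_smul_measure, integral_smul_measure, integral_smul_measure,
    integral_dirac, integral_dirac, integral_dirac, integral_dirac,
    ENNReal.toReal_ofReal hw, ENNReal.toReal_ofReal hw']
  simp [smul_eq_mul]

lemma quaternary_add (μ₀ wP w'P wQ w'Q : ℝ) (hwP : 0 ≤ wP) (hw'P : 0 ≤ w'P)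
    (hwQ : 0 ≤ wQ) (hw'Q : 0 ≤ w'Q) :
    quaternary μ₀ wP w'P + quaternary μ₀ wQ w'Q = quaternary μ₀ (wP + wQ) (w'P + w'Q) := by
  simp only [quaternary, ENNReal.ofReal_add hwP hwQ, ENNReal.ofReal_add hw'P hw'Q, add_smul]
  abel

lemma withDensity_dirac' (f : ℝ → ℝ≥0∞) (a : ℝ) :
    (Measure.dirac a).withDensity f = f a • Measure.dirac a := by
  classical
  ext s hs
  rw [withDensity_apply _ hs, MeasureTheory.setLIntegral_dirac f s, Measure.smul_apply,
    Measure.dirac_apply' _ hs, smul_eq_mul]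
  split_ifs with h <;> simp [Set.indicator, h]

lemma withDensity_quaternary (μ₀ W W' : ℝ) (f : ℝ → ℝ≥0∞) :
    (quaternary μ₀ W W').withDensity f =
      (ENNReal.ofReal W * f 1) • Measure.dirac 1 +
      (ENNReal.ofReal W * f (-1)) • Measure.dirac (-1) +
      (ENNReal.ofReal W' * f μ₀) • Measure.dirac μ₀ +
      (ENNReal.ofReal W' * f (-μ₀)) • Measure.dirac (-μ₀) := by
  simp only [quaternary, withDensity_add_measure, withDensity_smul_measure,
    withDensity_dirac', smul_smul]

noncomputable def qdens (μ₀ : ℝ) (a b : ℝ≥0∞) : ℝ → ℝ≥0∞ :=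
  fun x => if x = 1 ∨ x = -1 then a else if x = μ₀ ∨ x = -μ₀ then b else 0

lemma measurable_qdens (μ₀ : ℝ) (a b : ℝ≥0∞) : Measurable (qdens μ₀ a b) := by
  unfold qdens
  have h1 : MeasurableSet {x : ℝ | x = 1 ∨ x = -1} := by
    have : {x : ℝ | x = 1 ∨ x = -1} = {1} ∪ {-1} := by ext x; simp [or_comm]
    rw [this]; exact (measurableSet_singleton _).union (measurableSet_singleton _)
  have h2 : MeasurableSet {x : ℝ | x = μ₀ ∨ x = -μ₀} := by
    have : {x : ℝ | x = μ₀ ∨ x = -μ₀} = {μ₀} ∪ {-μ₀} := by ext x; simp [or_comm]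
    rw [this]; exact (measurableSet_singleton _).union (measurableSet_singleton _)
  exact Measurable.ite h1 measurable_const (Measurable.ite h2 measurable_const measurable_const)

lemma qdens_one (μ₀ : ℝ) (a b : ℝ≥0∞) : qdens μ₀ a b 1 = a := by
  simp [qdens]

lemma qdens_neg_one (μ₀ : ℝ) (a b : ℝ≥0∞) : qdens μ₀ a b (-1) = a := by
  simp [qdens]

lemma qdens_mu (μ₀ : ℝ) (hμ : 1 < μ₀) (a b : ℝ≥0∞) : qdens μ₀ a b μ₀ = b := by
  have h : ¬(μ₀ = 1 ∨ μ₀ = -1) := by push_neg; constructor <;> nlinarith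
  unfold qdens
  rw [if_neg h, if_pos (Or.inl rfl)]

lemma qdens_neg_mu (μ₀ : ℝ) (hμ : 1 < μ₀) (a b : ℝ≥0∞) : qdens μ₀ a b (-μ₀) = b := by
  have h : ¬(-μ₀ = 1 ∨ -μ₀ = -1) := by push_neg; constructor <;> nlinarith
  unfold qdens
  rw [if_neg h, if_pos (Or.inr rfl)]

lemma rnDeriv_quaternary (μ₀ w w' W W' : ℝ) (hμ : 1 < μ₀)
    (hW : 0 < W) (hW' : 0 < W') :
    (quaternary μ₀ w w').rnDeriv (quaternary μ₀ W W') =ᵐ[quaternary μ₀ W W']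
      qdens μ₀ (ENNReal.ofReal (w / W)) (ENNReal.ofReal (w' / W')) := by
  refine (Measure.eq_rnDeriv (measurable_qdens μ₀ _ _)
    Measure.MutuallySingular.zero_left ?_).symm
  have e1 : ENNReal.ofReal W * ENNReal.ofReal (w / W) = ENNReal.ofReal w := by
    rw [← ENNReal.ofReal_mul hW.le, mul_comm, div_mul_cancel₀ w hW.ne']
  have e2 : ENNReal.ofReal W' * ENNReal.ofReal (w' / W') = ENNReal.ofReal w' := by
    rw [← ENNReal.ofReal_mul hW'.le, mul_comm, div_mul_cancel₀ w' hW'.ne']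
  rw [zero_add, withDensity_quaternary, qdens_one, qdens_neg_one, qdens_mu μ₀ hμ,
    qdens_neg_mu μ₀ hμ, e1, e2]
  rfl

lemma sqrt_sub_sq_mul (a b W : ℝ) (ha : 0 ≤ a) (hb : 0 ≤ b) (hW : 0 < W) :
    W * (Real.sqrt (a / W) - Real.sqrt (b / W)) ^ 2 = (Real.sqrt a - Real.sqrt b) ^ 2 := by
  rw [Real.sqrt_div ha, Real.sqrt_div hb, div_sub_div_same, div_pow, Real.sq_sqrt hW.le,
    mul_div_cancel₀ _ hW.ne']

lemma sqrt_half_sq (a b : ℝ) (ha : 0 ≤ a) (hb : 0 ≤ b) :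
    (Real.sqrt (a / 2) - Real.sqrt (b / 2)) ^ 2 = (Real.sqrt a - Real.sqrt b) ^ 2 / 2 := by
  rw [Real.sqrt_div ha, Real.sqrt_div hb, div_sub_div_same, div_pow,
    Real.sq_sqrt (by norm_num : (0:ℝ) ≤ 2)]

lemma hellingerSq_quaternary (μ₀ wP w'P wQ w'Q : ℝ) (hμ : 1 < μ₀)
    (hwP : 0 ≤ wP) (hw'P : 0 ≤ w'P) (hwQ : 0 ≤ wQ) (hw'Q : 0 ≤ w'Q)
    (hW : 0 < wP + wQ) (hW' : 0 < w'P + w'Q) :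
    hellingerSq (quaternary μ₀ wP w'P) (quaternary μ₀ wQ w'Q) =
      (Real.sqrt wP - Real.sqrt wQ) ^ 2 + (Real.sqrt w'P - Real.sqrt w'Q) ^ 2 := by
  have hadd : quaternary μ₀ wP w'P + quaternary μ₀ wQ w'Q
      = quaternary μ₀ (wP + wQ) (w'P + w'Q) := quaternary_add μ₀ wP w'P wQ w'Q hwP hw'P hwQ hw'Q
  set fP := qdens μ₀ (ENNReal.ofReal (wP / (wP + wQ))) (ENNReal.ofReal (w'P / (w'P + w'Q)))
  set fQ := qdens μ₀ (ENNReal.ofReal (wQ / (wP + wQ))) (ENNReal.ofReal (w'Q / (w'P + w'Q)))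
  have hP : (quaternary μ₀ wP w'P).rnDeriv (quaternary μ₀ (wP + wQ) (w'P + w'Q))
      =ᵐ[quaternary μ₀ (wP + wQ) (w'P + w'Q)] fP :=
    rnDeriv_quaternary μ₀ wP w'P _ _ hμ hW hW'
  have hQ : (quaternary μ₀ wQ w'Q).rnDeriv (quaternary μ₀ (wP + wQ) (w'P + w'Q))
      =ᵐ[quaternary μ₀ (wP + wQ) (w'P + w'Q)] fQ :=
    rnDeriv_quaternary μ₀ wQ w'Q _ _ hμ hW hW'
  unfold hellingerSq
  rw [hadd]
  have hcong : (fun x => (Real.sqrt (((quaternary μ₀ wP w'P).rnDeriv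
        (quaternary μ₀ (wP + wQ) (w'P + w'Q))) x).toReal
      - Real.sqrt (((quaternary μ₀ wQ w'Q).rnDeriv
        (quaternary μ₀ (wP + wQ) (w'P + w'Q))) x).toReal) ^ 2)
      =ᵐ[quaternary μ₀ (wP + wQ) (w'P + w'Q)]
      (fun x => (Real.sqrt (fP x).toReal - Real.sqrt (fQ x).toReal) ^ 2) := by
    filter_upwards [hP, hQ] with x h1 h2
    rw [h1, h2]
  rw [integral_congr_ae hcong,
    integral_quaternary μ₀ (wP + wQ) (w'P + w'Q) hW.le hW'.le _]
  simp only [fP, fQ, qdens_one, qdens_neg_one, qdens_mu μ₀ hμ, qdens_neg_mu μ₀ hμ]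
  rw [ENNReal.toReal_ofReal (div_nonneg hwP hW.le),
    ENNReal.toReal_ofReal (div_nonneg hwQ hW.le),
    ENNReal.toReal_ofReal (div_nonneg hw'P hW'.le),
    ENNReal.toReal_ofReal (div_nonneg hw'Q hW'.le)]
  have e1 := sqrt_sub_sq_mul wP wQ (wP + wQ) hwP hwQ hW
  have e2 := sqrt_sub_sq_mul w'P w'Q (w'P + w'Q) hw'P hw'Q hW'
  nlinarith [e1, e2]

/-- Here `sP` and `sQ` denote the variances `σ_P²` and `σ_Q²`, both `> 1`,
`ξ = (σ_P² − 1)/(σ_Q² − 1)` and `μ_j = √(1 + j(σ_Q² − 1))`. -/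
theorem quaternary_sequence_hellinger_tendsto_zero
    (sP sQ : ℝ) (hsP : 1 < sP) (hsQ : 1 < sQ)
    (ξ : ℝ) (hξ : ξ = (sP - 1) / (sQ - 1)) :
    (∀ j : ℕ, ξ < j →
      (∫ x, x ∂(quaternary (Real.sqrt (1 + j * (sQ - 1)))
          (1 / 2 - ξ / (2 * j)) (ξ / (2 * j))) = 0) ∧
      (∫ x, x ^ 2 ∂(quaternary (Real.sqrt (1 + j * (sQ - 1)))
          (1 / 2 - ξ / (2 * j)) (ξ / (2 * j)))) -
        (∫ x, x ∂(quaternary (Real.sqrt (1 + j * (sQ - 1)))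
          (1 / 2 - ξ / (2 * j)) (ξ / (2 * j)))) ^ 2 = sP ∧
      (∫ x, x ∂(quaternary (Real.sqrt (1 + j * (sQ - 1)))
          (1 / 2 - 1 / (2 * j)) (1 / (2 * j))) = 0) ∧
      (∫ x, x ^ 2 ∂(quaternary (Real.sqrt (1 + j * (sQ - 1)))
          (1 / 2 - 1 / (2 * j)) (1 / (2 * j)))) -
        (∫ x, x ∂(quaternary (Real.sqrt (1 + j * (sQ - 1)))
          (1 / 2 - 1 / (2 * j)) (1 / (2 * j)))) ^ 2 = sQ ∧
      hellingerSq
        (quaternary (Real.sqrt (1 + j * (sQ - 1))) (1 / 2 - ξ / (2 * j)) (ξ / (2 * j)))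
        (quaternary (Real.sqrt (1 + j * (sQ - 1))) (1 / 2 - 1 / (2 * j)) (1 / (2 * j))) =
        binaryH (ξ / j) (1 / j)) ∧
    Tendsto (fun j : ℕ => binaryH (ξ / j) (1 / j)) atTop (nhds 0) := by
  have hξ0 : 0 < ξ := by rw [hξ]; exact div_pos (by linarith) (by linarith)
  constructor
  · intro j hj
    set n : ℝ := (j : ℝ) with hn
    have hn0 : 0 < n := lt_trans hξ0 hj
    have hn1 : 1 ≤ n := by
      rw [hn]
      exact_mod_cast Nat.one_le_iff_ne_zero.2 (by rintro rfl; simp [hn] at hn0)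
    set μ₀ : ℝ := Real.sqrt (1 + n * (sQ - 1)) with hμ₀
    have hbase : (1:ℝ) < 1 + n * (sQ - 1) := by nlinarith
    have hμ : 1 < μ₀ := by
      rw [hμ₀, Real.lt_sqrt (by norm_num)]
      nlinarith
    have hμsq : μ₀ ^ 2 = 1 + n * (sQ - 1) := Real.sq_sqrt (by linarith)
    have hwP : 0 ≤ 1 / 2 - ξ / (2 * n) := by
      rw [sub_nonneg, div_le_div_iff₀ (by linarith) (by norm_num)]
      linarith
    have hw'P : 0 ≤ ξ / (2 * n) := div_nonneg hξ0.le (by linarith)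
    have hwQ : 0 ≤ 1 / 2 - 1 / (2 * n) := by
      rw [sub_nonneg, div_le_div_iff₀ (by linarith) (by norm_num)]
      linarith
    have hw'Q : 0 ≤ 1 / (2 * n) := by positivity
    have hW : 0 < (1 / 2 - ξ / (2 * n)) + (1 / 2 - 1 / (2 * n)) := by
      have : ξ / (2 * n) < 1 / 2 := by
        rw [div_lt_div_iff₀ (by linarith) (by norm_num)]; linarith
      linarith
    have hW' : 0 < ξ / (2 * n) + 1 / (2 * n) := by positivity
    have hmean : ∀ w w' : ℝ, 0 ≤ w → 0 ≤ w' →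
        ∫ x, x ∂(quaternary μ₀ w w') = 0 := by
      intro w w' hw hw'
      rw [integral_quaternary μ₀ w w' hw hw' (fun x => x)]
      ring
    have hvar : ∀ w w' : ℝ, 0 ≤ w → 0 ≤ w' →
        ∫ x, x ^ 2 ∂(quaternary μ₀ w w') = 2 * w + 2 * w' * (1 + n * (sQ - 1)) := by
      intro w w' hw hw'
      rw [integral_quaternary μ₀ w w' hw hw' (fun x => x ^ 2)]
      have : (-μ₀) ^ 2 = μ₀ ^ 2 := by ring
      rw [this, hμsq]
      ring
    have hsQ1 : sQ - 1 ≠ 0 := by linarith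
    have hξs : ξ * (sQ - 1) = sP - 1 := by
      rw [hξ]; field_simp
    refine ⟨hmean _ _ hwP hw'P, ?_, hmean _ _ hwQ hw'Q, ?_, ?_⟩
    · rw [hvar _ _ hwP hw'P, hmean _ _ hwP hw'P]
      have hne : n ≠ 0 := hn0.ne'
      field_simp
      linear_combination n * hξs
    · rw [hvar _ _ hwQ hw'Q, hmean _ _ hwQ hw'Q]
      have hne : n ≠ 0 := hn0.ne'
      field_simp
      ring
    · rw [hellingerSq_quaternary μ₀ _ _ _ _ hμ hwP hw'P hwQ hw'Q hW hW']
      have e1 : 1 / 2 - ξ / (2 * n) = (1 - ξ / n) / 2 := by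
        rw [sub_div, div_div]; ring
      have e2 : 1 / 2 - 1 / (2 * n) = (1 - 1 / n) / 2 := by
        rw [sub_div, div_div]; ring
      have e3 : ξ / (2 * n) = (ξ / n) / 2 := by
        rw [div_div]; ring
      have e4 : 1 / (2 * n) = (1 / n) / 2 := by
        rw [div_div]; ring
      have hξn : ξ / n ≤ 1 := by
        rw [div_le_one hn0]; linarith
      have h1n : 1 / n ≤ 1 := by
        rw [div_le_one hn0]; linarith
      rw [e1, e2, e3, e4,
        sqrt_half_sq _ _ (by linarith) (by linarith),
        sqrt_half_sq _ _ (div_nonneg hξ0.le hn0.le) (by positivity)]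
      unfold binaryH
      ring
  · have h1 : Tendsto (fun j : ℕ => ξ / (j : ℝ)) atTop (nhds 0) :=
      Tendsto.div_atTop tendsto_const_nhds tendsto_natCast_atTop_atTop
    have h2 : Tendsto (fun j : ℕ => 1 / (j : ℝ)) atTop (nhds 0) :=
      Tendsto.div_atTop tendsto_const_nhds tendsto_natCast_atTop_atTop
    have hc : Continuous fun p : ℝ × ℝ => binaryH p.1 p.2 := by
      unfold binaryH
      fun_prop
    have key := (hc.tendsto (0, 0)).comp (h1.prodMk_nhds h2)
    rw [show (0:ℝ) = binaryH 0 0 by simp [binaryH]]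
    exact key
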